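/- For a finite set X of m positive integers, the number of noncrossing symmetric perfect matchings on X ⊔ (−X) equals the central binomial coefficient C(m, ⌊m/2⌋). -/

import Mathlib

/-- `M` is a noncrossing symmetric perfect matching on `X ⊔ (−X)`: all blocks
have size 2, blocks consist of elements of `X ⊔ (−X)`, every element of
`X ⊔ (−X)` lies in exactly one block, `M` is invariant under negation, and no
two blocks `{a,c}`, `{b,d}` satisfy `a < b < c < d`. -/
def IsNCSP (X : Finset ℤ) (M : Finset (Finset ℤ)) : Prop :=
  (∀ b ∈ M, b.card = 2) ∧
  (∀ b ∈ M, ∀ x ∈ b, x ∈ X ∨ -x ∈ X) ∧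
  (∀ x : ℤ, (x ∈ X ∨ -x ∈ X) → ∃! b : Finset ℤ, b ∈ M ∧ x ∈ b) ∧
  (∀ b ∈ M, b.image (fun x => -x) ∈ M) ∧
  ¬∃ a b c d : ℤ, a < b ∧ b < c ∧ c < d ∧
    ({a, c} : Finset ℤ) ∈ M ∧ ({b, d} : Finset ℤ) ∈ M

section Auxiliary
open Finset

/-- number of nonnegative walks of length `m` starting at height `h`. -/
def Nw : ℕ → ℕ → ℕ
  | 0, _ => 1
  | m+1, h => Nw m (h+1) + if h = 0 then 0 else Nw m (h-1)

/-- closed form. -/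
def Gw (m h : ℕ) : ℕ := ∑ j ∈ Finset.Icc ((m+h)/2 - h) ((m+h)/2), m.choose j

lemma sum_choose_shift (m a b : ℕ) (h1 : 1 ≤ a) (h2 : a ≤ b) :
    (∑ j ∈ Finset.Icc a b, m.choose (j-1)) = ∑ j ∈ Finset.Icc (a-1) (b-1), m.choose j := by
  refine Finset.sum_nbij' (fun j => j - 1) (fun j => j + 1) ?_ ?_ ?_ ?_ ?_ <;>
    simp only [Finset.mem_Icc] <;> intro x hx <;> first | trivial | omega

lemma pascal_sum (m a b : ℕ) (h1 : 1 ≤ a) (h2 : a ≤ b) :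
    (∑ j ∈ Finset.Icc a b, (m+1).choose j)
      = (∑ j ∈ Finset.Icc a b, m.choose j) + ∑ j ∈ Finset.Icc (a-1) (b-1), m.choose j := by
  rw [← sum_choose_shift m a b h1 h2, ← Finset.sum_add_distrib]
  apply Finset.sum_congr rfl
  intro j hj
  simp only [Finset.mem_Icc] at hj
  obtain ⟨k, rfl⟩ : ∃ k, j = k + 1 := ⟨j - 1, by omega⟩
  rw [Nat.choose_succ_succ]
  simp [Nat.add_comm]

lemma Gw_pow (m h : ℕ) (hmh : m ≤ h) : Gw m h = 2 ^ m := by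
  unfold Gw
  have h1 : (m+h)/2 - h = 0 := by omega
  have h2 : m ≤ (m+h)/2 := by omega
  rw [h1]
  have e : ∑ j ∈ Finset.Icc 0 ((m+h)/2), m.choose j
      = ∑ j ∈ Finset.Icc 0 m, m.choose j := by
    symm
    apply Finset.sum_subset
    · intro x hx; simp only [Finset.mem_Icc] at *; omega
    · intro x _ hx; simp only [Finset.mem_Icc] at hx
      exact Nat.choose_eq_zero_of_lt (by omega)
  rw [e]
  have e2 : Finset.Icc 0 m = Finset.range (m+1) := by ext x; simp
  rw [e2, Nat.sum_range_choose]

lemma Gw_step0 (m : ℕ) : Gw (m+1) 0 = Gw m 1 := by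
  by_cases m0 : m = 0
  · subst m0; simp [Gw]
  · unfold Gw
    have e1 : (m+1+0)/2 - 0 = (m+1+0)/2 := by omega
    rw [e1, Finset.Icc_self, Finset.sum_singleton]
    obtain ⟨k, hk⟩ : ∃ k, (m+1+0)/2 = k + 1 := ⟨(m+1+0)/2 - 1, by omega⟩
    rw [hk, Nat.choose_succ_succ]
    have e3 : Finset.Icc (k+1-1) (k+1) = insert k (Finset.Icc (k+1) (k+1)) := by
      ext x; simp only [Finset.mem_Icc, Finset.mem_insert]; omega
    rw [e3, Finset.sum_insert (by simp), Finset.Icc_self, Finset.sum_singleton]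

lemma Gw_step (m h : ℕ) : Gw (m+1) h = Gw m (h+1) + if h = 0 then 0 else Gw m (h-1) := by
  by_cases h0 : h = 0
  · subst h0
    rw [if_pos rfl, add_zero, Gw_step0]
  · -- h ≥ 1
    have h1 : 1 ≤ h := by omega
    rw [if_neg h0]
    by_cases hbig : m + 1 ≤ h
    · rw [Gw_pow (m+1) h hbig, Gw_pow m (h+1) (by omega), Gw_pow m (h-1) (by omega)]
      ring
    · by_cases heq : h = m
      · have hm1 : 1 ≤ m := by omega
        subst heq
        unfold Gw
        have e1 : (h+1+h)/2 = h := by omega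
        rw [e1]
        have e1' : h - h = 0 := by omega
        rw [e1']
        have lhs : ∑ j ∈ Finset.Icc 0 h, (h+1).choose j = 2^(h+1) - 1 := by
          have e : Finset.Icc 0 h = (Finset.range (h+2)).erase (h+1) := by
            ext x; simp; omega
          have key := Finset.sum_erase_add (Finset.range (h+2)) (fun j => (h+1).choose j)
            (show h+1 ∈ Finset.range (h+2) by simp)
          simp only [Nat.sum_range_choose, Nat.choose_self] at key
          rw [e]
          omega
        rw [lhs]
        have e2 : (h+(h+1))/2 - (h+1) = 0 := by omega
        have rhs1 : ∑ j ∈ Finset.Icc ((h+(h+1))/2 - (h+1)) ((h+(h+1))/2), h.choose j = 2^h := by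
          rw [e2]
          have e : ∑ j ∈ Finset.Icc 0 ((h+(h+1))/2), h.choose j
              = ∑ j ∈ Finset.Icc 0 h, h.choose j := by
            symm
            apply Finset.sum_subset
            · intro x hx; simp only [Finset.mem_Icc] at *; omega
            · intro x _ hx; simp only [Finset.mem_Icc] at hx
              exact Nat.choose_eq_zero_of_lt (by omega)
          rw [e]
          have e' : Finset.Icc 0 h = Finset.range (h+1) := by ext x; simp
          rw [e', Nat.sum_range_choose]
        rw [rhs1]
        have e3 : (h+(h-1))/2 = h - 1 := by omega
        rw [e3]
        have e4 : h - 1 - (h-1) = 0 := by omega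
        rw [e4]
        have rhs2 : ∑ j ∈ Finset.Icc 0 (h-1), h.choose j = 2^h - 1 := by
          have e : Finset.Icc 0 (h-1) = (Finset.range (h+1)).erase h := by
            ext x; simp; omega
          have key := Finset.sum_erase_add (Finset.range (h+1)) (fun j => h.choose j)
            (show h ∈ Finset.range (h+1) by simp)
          simp only [Nat.sum_range_choose, Nat.choose_self] at key
          rw [e]
          omega
        rw [rhs2]
        have h5 : 1 ≤ 2^h := Nat.one_le_two_pow
        have h6 : 1 ≤ 2^(h+1) := Nat.one_le_two_pow
        have hpow : 2^(h+1) = 2^h + 2^h := by ring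
        omega
      · -- central case: 1 ≤ h ≤ m - 1
        have hc : h + 1 ≤ m := by omega
        unfold Gw
        set J := (m+1+h)/2 with hJ
        have e1 : (m+(h+1))/2 = J := by omega
        have e2 : (m+(h-1))/2 = J - 1 := by omega
        have hJh : h + 1 ≤ J := by omega
        rw [e1, e2]
        have e3 : J - 1 - (h-1) = J - h := by omega
        rw [e3]
        rw [pascal_sum m (J-h) J (by omega) (by omega)]
        have e4 : Finset.Icc (J-h-1) J = insert (J-h-1) (Finset.Icc (J-h) J) := by
          ext x; simp only [Finset.mem_Icc, Finset.mem_insert]; omega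
        have e5 : Finset.Icc (J-h-1) (J-1) = insert (J-h-1) (Finset.Icc (J-h) (J-1)) := by
          ext x; simp only [Finset.mem_Icc, Finset.mem_insert]; omega
        have e6 : J - (h+1) = J - h - 1 := by omega
        rw [e6, e4, e5, Finset.sum_insert (by simp; omega), Finset.sum_insert (by simp; omega)]
        ring

lemma Nw_eq_Gw (m h : ℕ) : Nw m h = Gw m h := by
  induction m generalizing h with
  | zero =>
    show 1 = Gw 0 h
    unfold Gw
    have h0 : (0+h)/2 - h = 0 := by omega
    rw [h0]
    have e : ∑ j ∈ Finset.Icc 0 ((0+h)/2), Nat.choose 0 j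
        = ∑ j ∈ Finset.Icc 0 0, Nat.choose 0 j := by
      symm
      apply Finset.sum_subset
      · intro x hx; simp only [Finset.mem_Icc] at *; omega
      · intro x _ hx; simp only [Finset.mem_Icc] at hx
        exact Nat.choose_eq_zero_of_lt (by omega)
    rw [e]; simp
  | succ m ih =>
    rw [Gw_step]
    show Nw m (h+1) + _ = _
    rw [ih, ih]

lemma Gw_zero (m : ℕ) : Gw m 0 = m.choose (m/2) := by
  unfold Gw
  have e : (m+0)/2 - 0 = (m+0)/2 := by omega
  rw [e, Finset.Icc_self, Finset.sum_singleton]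
  norm_num

open scoped Classical

def cnt (A : Finset ℤ) (t : ℤ) : ℕ := (A.filter (fun x => x ≤ t)).card

def hgt (X C : Finset ℤ) (t : ℤ) : ℤ := (cnt (X \ C) t : ℤ) - (cnt C t : ℤ)

def PBh (X : Finset ℤ) (h : ℕ) (C : Finset ℤ) : Prop := ∀ t : ℤ, 0 ≤ (h : ℤ) + hgt X C t

lemma cnt_eq_zero {A : Finset ℤ} {t : ℤ} (h : ∀ x ∈ A, t < x) : cnt A t = 0 := by
  unfold cnt
  rw [Finset.card_eq_zero, Finset.filter_eq_empty_iff]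
  intro x hx
  simp only [not_le]
  exact h x hx

lemma cnt_insert (A : Finset ℤ) (a t : ℤ) (ha : a ∉ A) :
    cnt (insert a A) t = cnt A t + if a ≤ t then 1 else 0 := by
  unfold cnt
  rw [Finset.filter_insert]
  split_ifs with hat
  · rw [Finset.card_insert_of_notMem (by simp [ha])]
  · rfl

lemma cnt_erase (A : Finset ℤ) (a t : ℤ) (ha : a ∈ A) :
    cnt A t = cnt (A.erase a) t + if a ≤ t then 1 else 0 := by
  have h1 : A = insert a (A.erase a) := by rw [Finset.insert_erase ha]
  conv_lhs => rw [h1]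
  rw [cnt_insert _ a t (Finset.notMem_erase a A)]

lemma cnt_one_le {A : Finset ℤ} {a t : ℤ} (ha : a ∈ A) (hat : a ≤ t) : 1 ≤ cnt A t := by
  unfold cnt
  rw [Nat.one_le_iff_ne_zero, ← Nat.pos_iff_ne_zero, Finset.card_pos]
  exact ⟨a, Finset.mem_filter.mpr ⟨ha, hat⟩⟩

lemma countPB (n : ℕ) : ∀ (X : Finset ℤ), X.card = n → ∀ (h : ℕ),
    ((X.powerset.filter (PBh X h)).card = Nw n h) := by
  induction n with
  | zero =>
    intro X hX h
    rw [Finset.card_eq_zero] at hX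
    subst hX
    rw [Finset.powerset_empty, Finset.filter_singleton, if_pos]
    · simp [Nw]
    · intro t
      simp [hgt, cnt]
  | succ n ih =>
    intro X hX h
    have hne : X.Nonempty := by rw [← Finset.card_pos]; omega
    set a := X.min' hne with hadef
    have ha : a ∈ X := X.min'_mem hne
    have hmin : ∀ x ∈ X, a ≤ x := fun x hx => X.min'_le x hx
    set X' := X.erase a with hX'def
    have haX' : a ∉ X' := Finset.notMem_erase a X
    have hX' : X'.card = n := by rw [hX'def, Finset.card_erase_of_mem ha]; omega
    have hX'sub : ∀ x ∈ X', a ≤ x ∧ x ≠ a := by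
      intro x hx
      exact ⟨hmin x (Finset.mem_of_mem_erase hx), Finset.ne_of_mem_erase hx⟩
    -- common small lemma: below a, heights vanish
    have hlow : ∀ (Y D : Finset ℤ), D ⊆ Y → (∀ x ∈ Y, a ≤ x) → ∀ t : ℤ, t < a → hgt Y D t = 0 := by
      intro Y D hDY hY t hta
      unfold hgt
      rw [cnt_eq_zero (fun x hx => lt_of_lt_of_le hta (hY x (Finset.mem_sdiff.mp hx).1)),
        cnt_eq_zero (fun x hx => lt_of_lt_of_le hta (hY x (hDY hx)))]
      simp
    set S := X.powerset.filter (PBh X h) with hS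
    have hsplit : (S.filter (fun C => a ∈ C)).card + (S.filter (fun C => ¬ a ∈ C)).card = S.card :=
      Finset.card_filter_add_card_filter_not _
    -- the part with a ∉ C
    have hpart2 : (S.filter (fun C => ¬ a ∈ C)).card
        = (X'.powerset.filter (PBh X' (h+1))).card := by
      refine Finset.card_bij' (fun C _ => C) (fun C _ => C) ?_ ?_ ?_ ?_
      · intro C hC
        simp only [hS, Finset.mem_filter, Finset.mem_powerset] at hC ⊢
        obtain ⟨⟨hCX, hPB⟩, haC⟩ := hC
        have hsd : X \ C = insert a (X' \ C) := by
          ext x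
          simp only [Finset.mem_sdiff, Finset.mem_insert, hX'def, Finset.mem_erase]
          constructor
          · intro ⟨hx1, hx2⟩
            by_cases hxa : x = a
            · left; exact hxa
            · right; exact ⟨⟨hxa, hx1⟩, hx2⟩
          · rintro (rfl | ⟨⟨_, hx1⟩, hx2⟩)
            · exact ⟨ha, haC⟩
            · exact ⟨hx1, hx2⟩
        have hgt_eq : ∀ t : ℤ, hgt X C t = hgt X' C t + if a ≤ t then 1 else 0 := by
          intro t
          unfold hgt
          rw [hsd, cnt_insert _ a t (by simp [Finset.mem_sdiff, haX'])]
          push_cast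
          split_ifs <;> ring
        constructor
        · intro x hx
          exact Finset.mem_erase.mpr ⟨fun hxa => haC (hxa ▸ hx), hCX hx⟩
        · intro t
          by_cases hta : t < a
          · rw [hlow X' C (fun x hx => Finset.mem_erase.mpr
              ⟨fun hxa => haC (hxa ▸ hx), hCX hx⟩) (fun x hx => (hX'sub x hx).1) t hta]
            push_cast; omega
          · have := hPB t
            rw [hgt_eq t, if_pos (by omega)] at this
            omega
      · intro C hC
        simp only [hS, Finset.mem_filter, Finset.mem_powerset] at hC ⊢
        obtain ⟨hCX, hPB⟩ := hC
        have haC : a ∉ C := fun hac => haX' (hCX hac)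
        have hCX2 : C ⊆ X := hCX.trans (Finset.erase_subset a X)
        have hsd : X \ C = insert a (X' \ C) := by
          ext x
          simp only [Finset.mem_sdiff, Finset.mem_insert, hX'def, Finset.mem_erase]
          constructor
          · intro ⟨hx1, hx2⟩
            by_cases hxa : x = a
            · left; exact hxa
            · right; exact ⟨⟨hxa, hx1⟩, hx2⟩
          · rintro (rfl | ⟨⟨_, hx1⟩, hx2⟩)
            · exact ⟨ha, haC⟩
            · exact ⟨hx1, hx2⟩
        refine ⟨⟨hCX2, ?_⟩, haC⟩
        intro t
        have hgt_eq : hgt X C t = hgt X' C t + if a ≤ t then 1 else 0 := by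
          unfold hgt
          rw [hsd, cnt_insert _ a t (by simp [Finset.mem_sdiff, haX'])]
          push_cast
          split_ifs <;> ring
        rw [hgt_eq]
        by_cases hta : t < a
        · rw [hlow X' C hCX (fun x hx => (hX'sub x hx).1) t hta, if_neg (by omega)]
          push_cast; omega
        · have := hPB t
          rw [if_pos (by omega)]
          omega
      · intro C _; rfl
      · intro C _; rfl
    -- the part with a ∈ C
    have hpart1 : (S.filter (fun C => a ∈ C)).card
        = if h = 0 then 0 else (X'.powerset.filter (PBh X' (h-1))).card := by
      split_ifs with h0
      · subst h0
        rw [Finset.card_eq_zero, Finset.filter_eq_empty_iff]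
        intro C hC
        simp only [hS, Finset.mem_filter, Finset.mem_powerset] at hC
        obtain ⟨hCX, hPB⟩ := hC
        intro haC
        have := hPB a
        unfold hgt at this
        have h1 : 1 ≤ cnt C a := cnt_one_le haC le_rfl
        have h2 : cnt (X \ C) a = 0 := by
          apply cnt_eq_zero
          intro x hx
          rw [Finset.mem_sdiff] at hx
          have hax : a ≤ x := hmin x hx.1
          have hxa : x ≠ a := fun hh => hx.2 (hh ▸ haC)
          omega
        omega
      · -- h ≥ 1 : bijection C ↦ C.erase a
        refine Finset.card_bij' (fun C _ => C.erase a) (fun C _ => insert a C) ?_ ?_ ?_ ?_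
        · intro C hC
          simp only [hS, Finset.mem_filter, Finset.mem_powerset] at hC ⊢
          obtain ⟨⟨hCX, hPB⟩, haC⟩ := hC
          have hsd : X \ C = X' \ C.erase a := by
            ext x
            simp only [Finset.mem_sdiff, hX'def, Finset.mem_erase]
            by_cases hxa : x = a
            · subst hxa
              simp [haC, ha]
            · simp [hxa]
          have hgt_eq : ∀ t : ℤ, hgt X C t = hgt X' (C.erase a) t - if a ≤ t then 1 else 0 := by
            intro t
            unfold hgt
            rw [hsd, cnt_erase C a t haC]
            push_cast
            split_ifs <;> ring
          constructor
          · intro x hx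
            have hx' : x ∈ C := Finset.mem_of_mem_erase hx
            exact Finset.mem_erase.mpr ⟨Finset.ne_of_mem_erase hx, hCX hx'⟩
          · intro t
            by_cases hta : t < a
            · rw [hlow X' (C.erase a) (fun x hx => Finset.mem_erase.mpr
                ⟨Finset.ne_of_mem_erase hx, hCX (Finset.mem_of_mem_erase hx)⟩)
                (fun x hx => (hX'sub x hx).1) t hta]
              push_cast; omega
            · have := hPB t
              rw [hgt_eq t, if_pos (by omega)] at this
              push_cast
              omega
        · intro C hC
          simp only [hS, Finset.mem_filter, Finset.mem_powerset] at hC ⊢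
          obtain ⟨hCX, hPB⟩ := hC
          have haC : a ∉ C := fun hac => haX' (hCX hac)
          have hCX2 : insert a C ⊆ X := by
            intro x hx
            rcases Finset.mem_insert.mp hx with rfl | hx
            · exact ha
            · exact Finset.mem_of_mem_erase (hCX hx)
          have hsd : X \ insert a C = X' \ C := by
            ext x
            simp only [Finset.mem_sdiff, hX'def, Finset.mem_erase, Finset.mem_insert]
            constructor
            · intro ⟨hx1, hx2⟩
              push_neg at hx2
              exact ⟨⟨hx2.1, hx1⟩, hx2.2⟩
            · intro ⟨⟨hxa, hx1⟩, hx2⟩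
              exact ⟨hx1, by push_neg; exact ⟨hxa, hx2⟩⟩
          refine ⟨⟨hCX2, ?_⟩, Finset.mem_insert_self a C⟩
          intro t
          have hgt_eq : hgt X (insert a C) t = hgt X' C t - if a ≤ t then 1 else 0 := by
            unfold hgt
            rw [hsd, cnt_insert C a t haC]
            push_cast
            split_ifs <;> ring
          rw [hgt_eq]
          by_cases hta : t < a
          · rw [hlow X' C hCX (fun x hx => (hX'sub x hx).1) t hta, if_neg (by omega)]
            push_cast; omega
          · have := hPB t
            rw [if_pos (by omega)]
            push_cast at this ⊢
            omega
        · intro C hC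
          simp only [hS, Finset.mem_filter] at hC
          show insert a (C.erase a) = C
          rw [Finset.insert_erase hC.2]
        · intro C hC
          simp only [Finset.mem_filter, Finset.mem_powerset] at hC
          show (insert a C).erase a = C
          rw [Finset.erase_insert (fun hac => haX' (hC.1 hac))]
    -- assemble
    show S.card = Nw (n+1) h
    rw [← hsplit, hpart1, hpart2, ih X' hX' (h+1)]
    show _ + _ = Nw n (h+1) + if h = 0 then 0 else Nw n (h-1)
    rw [add_comm]
    congr 1
    split_ifs with h0
    · rfl
    · exact ih X' hX' (h-1)

lemma first_passage_up (f : ℤ → ℤ) (hf : ∀ t : ℤ, f t ≤ f (t-1) + 1) :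
    ∀ (n : ℕ) (a b v : ℤ), b - a = n → a ≤ b → f a < v → v ≤ f b →
      ∃ s, a < s ∧ s ≤ b ∧ f s = v ∧ f (s-1) < v ∧ ∀ t, a ≤ t → t < s → f t < v := by
  intro n
  induction n with
  | zero =>
    intro a b v hn hab ha hb
    have heq : a = b := by omega
    subst heq
    omega
  | succ n ih =>
    intro a b v hn hab ha hb
    have hstep : f (a+1) ≤ f a + 1 := by
      have := hf (a+1)
      have e : a + 1 - 1 = a := by omega
      rwa [e] at this
    by_cases hcase : v ≤ f (a+1)
    · refine ⟨a+1, by omega, by omega, by omega, ?_, ?_⟩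
      · have e : a + 1 - 1 = a := by omega
        rw [e]; exact ha
      · intro t ht1 ht2
        have : t = a := by omega
        rw [this]; exact ha
    · push_neg at hcase
      have hab' : a + 1 ≤ b := by
        rcases eq_or_lt_of_le hab with rfl | hh
        · omega
        · omega
      obtain ⟨s, hs1, hs2, hs3, hs4, hs5⟩ := ih (a+1) b v (by omega) hab' hcase hb
      refine ⟨s, by omega, hs2, hs3, hs4, ?_⟩
      intro t ht1 ht2
      rcases eq_or_lt_of_le ht1 with rfl | hh
      · exact ha
      · exact hs5 t (by omega) ht2

lemma first_passage_down (f : ℤ → ℤ) (hf : ∀ t : ℤ, f (t-1) - 1 ≤ f t) :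
    ∀ (n : ℕ) (a b v : ℤ), b - a = n → a ≤ b → v < f a → f b ≤ v →
      ∃ s, a < s ∧ s ≤ b ∧ f s = v ∧ v < f (s-1) ∧ ∀ t, a ≤ t → t < s → v < f t := by
  intro n
  induction n with
  | zero =>
    intro a b v hn hab ha hb
    have heq : a = b := by omega
    subst heq
    omega
  | succ n ih =>
    intro a b v hn hab ha hb
    have hstep : f a - 1 ≤ f (a+1) := by
      have := hf (a+1)
      have e : a + 1 - 1 = a := by omega
      rwa [e] at this
    by_cases hcase : f (a+1) ≤ v
    · refine ⟨a+1, by omega, by omega, by omega, ?_, ?_⟩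
      · have e : a + 1 - 1 = a := by omega
        rw [e]; exact ha
      · intro t ht1 ht2
        have : t = a := by omega
        rw [this]; exact ha
    · push_neg at hcase
      have hab' : a + 1 ≤ b := by
        rcases eq_or_lt_of_le hab with rfl | hh
        · omega
        · omega
      obtain ⟨s, hs1, hs2, hs3, hs4, hs5⟩ := ih (a+1) b v (by omega) hab' hcase hb
      refine ⟨s, by omega, hs2, hs3, hs4, ?_⟩
      intro t ht1 ht2
      rcases eq_or_lt_of_le ht1 with rfl | hh
      · exact ha
      · exact hs5 t (by omega) ht2

lemma cnt_succ (A : Finset ℤ) (t : ℤ) :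
    cnt A t = cnt A (t-1) + if t ∈ A then 1 else 0 := by
  unfold cnt
  split_ifs with ht
  · have e : A.filter (fun x => x ≤ t) = insert t (A.filter (fun x => x ≤ t - 1)) := by
      ext x
      simp only [Finset.mem_filter, Finset.mem_insert]
      constructor
      · intro ⟨h1, h2⟩
        by_cases hxt : x = t
        · left; exact hxt
        · right; exact ⟨h1, by omega⟩
      · rintro (rfl | ⟨h1, h2⟩)
        · exact ⟨ht, le_refl _⟩
        · exact ⟨h1, by omega⟩
    rw [e, Finset.card_insert_of_notMem (by simp)]
  · have e : A.filter (fun x => x ≤ t) = A.filter (fun x => x ≤ t - 1) := by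
      ext x
      simp only [Finset.mem_filter]
      constructor
      · intro ⟨h1, h2⟩
        refine ⟨h1, ?_⟩
        rcases eq_or_lt_of_le h2 with rfl | hh
        · exact absurd h1 ht
        · omega
      · intro ⟨h1, h2⟩
        exact ⟨h1, by omega⟩
    rw [e, add_zero]

lemma hgt_step (X C : Finset ℤ) (hC : C ⊆ X) (t : ℤ) :
    hgt X C t = hgt X C (t-1) + (if t ∈ C then -1 else if t ∈ X then 1 else 0) := by
  unfold hgt
  rw [cnt_succ (X \ C) t, cnt_succ C t]
  by_cases htC : t ∈ C
  · rw [if_pos htC, if_neg (by simp [htC]), if_pos htC]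
    push_cast; ring
  · rw [if_neg htC]
    by_cases htX : t ∈ X
    · rw [if_pos (Finset.mem_sdiff.mpr ⟨htX, htC⟩), if_neg htC, if_pos htX]
      push_cast; ring
    · rw [if_neg (by simp [htX]), if_neg htC, if_neg htX]
      push_cast; ring

lemma hgt_up (X C : Finset ℤ) (hC : C ⊆ X) (t : ℤ) :
    hgt X C t ≤ hgt X C (t-1) + 1 := by
  rw [hgt_step X C hC t]; split_ifs <;> omega

lemma hgt_down (X C : Finset ℤ) (hC : C ⊆ X) (t : ℤ) :
    hgt X C (t-1) - 1 ≤ hgt X C t := by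
  rw [hgt_step X C hC t]; split_ifs <;> omega

lemma hgt_zero_of_lt (X C : Finset ℤ) (hC : C ⊆ X) (t : ℤ) (h : ∀ x ∈ X, t < x) :
    hgt X C t = 0 := by
  unfold hgt
  rw [cnt_eq_zero (fun x hx => h x (Finset.mem_sdiff.mp hx).1),
    cnt_eq_zero (fun x hx => h x (hC hx))]
  simp

/-- the up-step / down-step membership detection -/
lemma mem_of_up (X C : Finset ℤ) (hC : C ⊆ X) {s : ℤ}
    (h : hgt X C s = hgt X C (s-1) + 1) : s ∈ X \ C := by
  have := hgt_step X C hC s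
  rw [h] at this
  split_ifs at this with h1 h2
  · omega
  · exact Finset.mem_sdiff.mpr ⟨h2, h1⟩
  · omega

lemma mem_of_down (X C : Finset ℤ) (hC : C ⊆ X) {s : ℤ}
    (h : hgt X C s = hgt X C (s-1) - 1) : s ∈ C := by
  have := hgt_step X C hC s
  rw [h] at this
  split_ifs at this with h1 h2
  · exact h1
  · omega
  · omega

/-- candidate openers for a closer `c` -/
def cand (X C : Finset ℤ) (c : ℤ) : Finset ℤ :=
  (X \ C).filter (fun y => y < c ∧ hgt X C y = hgt X C c + 1)

/-- the opener matched to a closer `c` -/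
def ofn (X C : Finset ℤ) (c : ℤ) : ℤ := WithBot.unbotD 0 (cand X C c).max

lemma max_unbot'_mem {s : Finset ℤ} (h : s.Nonempty) : WithBot.unbotD 0 s.max ∈ s := by
  obtain ⟨b, hb⟩ := Finset.max_of_nonempty h
  rw [hb]
  exact Finset.mem_of_max hb

lemma le_max_unbot' {s : Finset ℤ} {y : ℤ} (h : y ∈ s) : y ≤ WithBot.unbotD 0 s.max := by
  obtain ⟨b, hb⟩ := Finset.max_of_nonempty ⟨y, h⟩
  rw [hb]
  exact Finset.le_max_of_eq h hb

section Walk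

variable {X C : Finset ℤ} (hC : C ⊆ X) (hPB : PBh X 0 C)

include hC in
lemma closer_step {c : ℤ} (hc : c ∈ C) : hgt X C (c-1) = hgt X C c + 1 := by
  have := hgt_step X C hC c
  rw [if_pos hc] at this
  omega

include hC hPB in
lemma cand_nonempty {c : ℤ} (hc : c ∈ C) : (cand X C c).Nonempty := by
  have hcX : c ∈ X := hC hc
  have hne : X.Nonempty := ⟨c, hcX⟩
  set aa := X.min' hne - 1 with haa
  have haa0 : hgt X C aa = 0 := by
    apply hgt_zero_of_lt X C hC
    intro x hx
    have := X.min'_le x hx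
    omega
  have hv : 0 ≤ hgt X C c := by have := hPB c; omega
  have hac : aa ≤ c - 1 := by
    have := X.min'_le c hcX
    omega
  obtain ⟨s, hs1, hs2, hs3, hs4, _⟩ := first_passage_up (hgt X C) (hgt_up X C hC)
    (c - 1 - aa).toNat aa (c-1) (hgt X C c + 1) (by omega) hac (by omega)
    (by rw [closer_step hC hc])
  have hups := hgt_up X C hC s
  have hsX : s ∈ X \ C := mem_of_up X C hC (by omega)
  exact ⟨s, Finset.mem_filter.mpr ⟨hsX, by omega, by omega⟩⟩

include hC hPB in
lemma ofn_spec {c : ℤ} (hc : c ∈ C) :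
    ofn X C c ∈ X \ C ∧ ofn X C c < c ∧ hgt X C (ofn X C c) = hgt X C c + 1 := by
  have h := max_unbot'_mem (cand_nonempty hC hPB hc)
  simp only [cand, Finset.mem_filter] at h
  exact ⟨h.1, h.2.1, h.2.2⟩

include hC hPB in
lemma claimA {c : ℤ} (hc : c ∈ C) :
    ∀ t, ofn X C c ≤ t → t < c → hgt X C c + 1 ≤ hgt X C t := by
  intro t ht1 ht2
  by_contra hcon
  push_neg at hcon
  obtain ⟨s, hs1, hs2, hs3, hs4, _⟩ := first_passage_up (hgt X C) (hgt_up X C hC)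
    (c - 1 - t).toNat t (c-1) (hgt X C c + 1) (by omega) (by omega) (by omega)
    (by rw [closer_step hC hc])
  have hups := hgt_up X C hC s
  have hsX : s ∈ X \ C := mem_of_up X C hC (by omega)
  have : s ≤ ofn X C c := le_max_unbot' (Finset.mem_filter.mpr ⟨hsX, by omega, by omega⟩)
  omega

include hC hPB in
lemma nested {c c' : ℤ} (hc : c ∈ C) (hc' : c' ∈ C) (hlt : c < c') :
    c ≤ ofn X C c' ∨ ofn X C c' < ofn X C c := by
  by_contra hcon
  push_neg at hcon
  obtain ⟨h1, h2⟩ := hcon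
  obtain ⟨ho1, ho2, ho3⟩ := ofn_spec hC hPB hc'
  have key1 : hgt X C c + 1 ≤ hgt X C (ofn X C c') := claimA hC hPB hc _ h2 h1
  have key2 : hgt X C c' + 1 ≤ hgt X C c := claimA hC hPB hc' c (by omega) hlt
  omega

include hC hPB in
lemma ofn_inj {c c' : ℤ} (hc : c ∈ C) (hc' : c' ∈ C) (h : ofn X C c = ofn X C c') :
    c = c' := by
  rcases lt_trichotomy c c' with hh | hh | hh
  · rcases nested hC hPB hc hc' hh with h1 | h1
    · have := (ofn_spec hC hPB hc).2.1; omega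
    · omega
  · exact hh
  · rcases nested hC hPB hc' hc hh with h1 | h1
    · have := (ofn_spec hC hPB hc').2.1; omega
    · omega

include hC hPB in
lemma covered {x c : ℤ} (hx : x ∈ X \ C) (hc : c ∈ C) (h1 : ofn X C c < x) (h2 : x < c) :
    ∃ c'' ∈ C, ofn X C c'' = x := by
  have hfx : hgt X C c + 1 ≤ hgt X C x := claimA hC hPB hc x (by omega) h2
  obtain ⟨s, hs1, hs2, hs3, hs4, hs5⟩ := first_passage_down (hgt X C) (hgt_down X C hC)
    (c - x).toNat x c (hgt X C x - 1) (by omega) (by omega) (by omega) (by omega)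
  have hdowns := hgt_down X C hC s
  have hups := hgt_up X C hC s
  have hsC : s ∈ C := mem_of_down X C hC (by omega)
  refine ⟨s, hsC, ?_⟩
  have hxcand : x ∈ cand X C s := Finset.mem_filter.mpr ⟨hx, hs1, by omega⟩
  have hle : x ≤ ofn X C s := le_max_unbot' hxcand
  rcases eq_or_lt_of_le hle with hh | hh
  · omega
  · exfalso
    obtain ⟨hy1, hy2, hy3⟩ := ofn_spec hC hPB hsC
    have hyup : hgt X C (ofn X C s) = hgt X C (ofn X C s - 1) + 1 := by
      have hst := hgt_step X C hC (ofn X C s)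
      rw [Finset.mem_sdiff] at hy1
      rw [if_neg hy1.2, if_pos hy1.1] at hst
      omega
    have hymem : hgt X C x - 1 < hgt X C (ofn X C s - 1) :=
      hs5 (ofn X C s - 1) (by omega) (by omega)
    omega

end Walk

def Cl (X : Finset ℤ) (M : Finset (Finset ℤ)) : Finset ℤ :=
  X.filter (fun x => ∃ z ∈ X, z < x ∧ ({z, x} : Finset ℤ) ∈ M)

def mkM (X C : Finset ℤ) : Finset (Finset ℤ) :=
  (C.image fun c => ({ofn X C c, c} : Finset ℤ)) ∪
  (C.image fun c => ({-c, -(ofn X C c)} : Finset ℤ)) ∪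
  (((X \ C) \ C.image (ofn X C)).image fun x => ({-x, x} : Finset ℤ))

lemma pair_inj {a b u v : ℤ} (h : ({a, b} : Finset ℤ) = {u, v}) (hab : a < b) (huv : u < v) :
    a = u ∧ b = v := by
  have ha : a ∈ ({u, v} : Finset ℤ) := by rw [← h]; simp
  have hb : b ∈ ({u, v} : Finset ℤ) := by rw [← h]; simp
  have hu : u ∈ ({a, b} : Finset ℤ) := by rw [h]; simp
  simp only [Finset.mem_insert, Finset.mem_singleton] at ha hb hu
  rcases ha with rfl | rfl <;> rcases hb with rfl | rfl <;> rcases hu with h' | h' <;> omega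

lemma mem_mkM {X C : Finset ℤ} {b : Finset ℤ} : b ∈ mkM X C ↔
    (∃ c ∈ C, b = {ofn X C c, c}) ∨ (∃ c ∈ C, b = {-c, -(ofn X C c)}) ∨
    (∃ x, (x ∈ X ∧ x ∉ C) ∧ x ∉ C.image (ofn X C) ∧ b = {-x, x}) := by
  unfold mkM
  simp only [Finset.mem_union, Finset.mem_image, Finset.mem_sdiff]
  constructor
  · rintro ((⟨c, hc, rfl⟩ | ⟨c, hc, rfl⟩) | ⟨x, ⟨⟨hx1, hx2⟩, hx3⟩, rfl⟩)
    · exact Or.inl ⟨c, hc, rfl⟩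
    · exact Or.inr (Or.inl ⟨c, hc, rfl⟩)
    · exact Or.inr (Or.inr ⟨x, ⟨hx1, hx2⟩, by simpa using hx3, rfl⟩)
  · rintro (⟨c, hc, rfl⟩ | ⟨c, hc, rfl⟩ | ⟨x, ⟨hx1, hx2⟩, hx3, rfl⟩)
    · exact Or.inl (Or.inl ⟨c, hc, rfl⟩)
    · exact Or.inl (Or.inr ⟨c, hc, rfl⟩)
    · exact Or.inr ⟨x, ⟨⟨hx1, hx2⟩, by simpa using hx3⟩, rfl⟩

section MK

variable {X C : Finset ℤ} (hC : C ⊆ X) (hPB : PBh X 0 C) (hpos : ∀ x ∈ X, 0 < x)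

include hC hpos in
lemma cpos {c : ℤ} (hc : c ∈ C) : 0 < c := hpos c (hC hc)

include hC hPB hpos in
lemma opos {c : ℤ} (hc : c ∈ C) : 0 < ofn X C c := by
  have h := (ofn_spec hC hPB hc).1
  exact hpos _ (Finset.mem_sdiff.mp h).1

include hC hPB hpos in
lemma blocks_of_pos {x : ℤ} (hx : x ∈ X) {b : Finset ℤ}
    (hb : b ∈ mkM X C) (hxb : x ∈ b) :
    (x ∈ C ∧ b = {ofn X C x, x}) ∨
    (∃ c ∈ C, ofn X C c = x ∧ b = {ofn X C c, c}) ∨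
    ((x ∈ X ∧ x ∉ C) ∧ x ∉ C.image (ofn X C) ∧ b = {-x, x}) := by
  have hxpos : 0 < x := hpos x hx
  rcases mem_mkM.mp hb with ⟨c, hc, rfl⟩ | ⟨c, hc, rfl⟩ | ⟨y, hy1, hy2, rfl⟩
  · simp only [Finset.mem_insert, Finset.mem_singleton] at hxb
    rcases hxb with rfl | rfl
    · exact Or.inr (Or.inl ⟨c, hc, rfl, rfl⟩)
    · exact Or.inl ⟨hc, rfl⟩
  · exfalso
    have h1 := cpos hC hpos hc
    have h2 := opos hC hPB hpos hc
    simp only [Finset.mem_insert, Finset.mem_singleton] at hxb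
    rcases hxb with rfl | rfl <;> omega
  · simp only [Finset.mem_insert, Finset.mem_singleton] at hxb
    have hypos : 0 < y := hpos y hy1.1
    rcases hxb with rfl | rfl
    · omega
    · exact Or.inr (Or.inr ⟨hy1, hy2, rfl⟩)

include hC hPB hpos in
lemma exu_pos {x : ℤ} (hx : x ∈ X) : ∃! b : Finset ℤ, b ∈ mkM X C ∧ x ∈ b := by
  by_cases hxC : x ∈ C
  · refine ⟨{ofn X C x, x}, ⟨mem_mkM.mpr (Or.inl ⟨x, hxC, rfl⟩), by simp⟩, ?_⟩
    rintro b ⟨hb, hxb⟩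
    rcases blocks_of_pos hC hPB hpos hx hb hxb with ⟨_, rfl⟩ | ⟨c, hc, hh, rfl⟩ | ⟨⟨_, hxc⟩, _, _⟩
    · rfl
    · exfalso
      have := (ofn_spec hC hPB hc).1
      rw [Finset.mem_sdiff] at this
      exact this.2 (hh ▸ hxC)
    · exact absurd hxC hxc
  · by_cases hxI : x ∈ C.image (ofn X C)
    · obtain ⟨c, hc, hcx⟩ := Finset.mem_image.mp hxI
      refine ⟨{ofn X C c, c}, ⟨mem_mkM.mpr (Or.inl ⟨c, hc, rfl⟩), by rw [hcx]; simp⟩, ?_⟩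
      rintro b ⟨hb, hxb⟩
      rcases blocks_of_pos hC hPB hpos hx hb hxb with ⟨hxC', _⟩ | ⟨c', hc', hh, rfl⟩ | ⟨_, hxI', _⟩
      · exact absurd hxC' hxC
      · have : c' = c := ofn_inj hC hPB hc' hc (by rw [hh, hcx])
        rw [this]
      · exact absurd hxI hxI'
    · refine ⟨{-x, x}, ⟨mem_mkM.mpr (Or.inr (Or.inr ⟨x, ⟨hx, hxC⟩, hxI, rfl⟩)), by simp⟩, ?_⟩
      rintro b ⟨hb, hxb⟩
      rcases blocks_of_pos hC hPB hpos hx hb hxb with ⟨hxC', _⟩ | ⟨c', hc', hh, rfl⟩ | ⟨_, _, rfl⟩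
      · exact absurd hxC' hxC
      · exact absurd (Finset.mem_image.mpr ⟨c', hc', hh⟩) hxI
      · rfl

lemma exu_neg_transfer {M : Finset (Finset ℤ)}
    (hsym : ∀ b ∈ M, b.image (fun z => -z) ∈ M) {x : ℤ}
    (h : ∃! b : Finset ℤ, b ∈ M ∧ x ∈ b) : ∃! b : Finset ℤ, b ∈ M ∧ -x ∈ b := by
  obtain ⟨b, ⟨hbM, hxb⟩, huniq⟩ := h
  refine ⟨b.image (fun z => -z), ⟨hsym b hbM, Finset.mem_image.mpr ⟨x, hxb, rfl⟩⟩, ?_⟩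
  rintro c ⟨hcM, hxc⟩
  have hx1 : x ∈ c.image (fun z => -z) := Finset.mem_image.mpr ⟨-x, hxc, by ring⟩
  have himg := huniq (c.image (fun z => -z)) ⟨hsym c hcM, hx1⟩
  rw [← himg, Finset.image_image]
  ext a
  simp

lemma mkM_sym {b : Finset ℤ} (hb : b ∈ mkM X C) : b.image (fun z => -z) ∈ mkM X C := by
  rcases mem_mkM.mp hb with ⟨c, hc, rfl⟩ | ⟨c, hc, rfl⟩ | ⟨y, hy1, hy2, rfl⟩
  · apply mem_mkM.mpr
    refine Or.inr (Or.inl ⟨c, hc, ?_⟩)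
    rw [Finset.image_insert, Finset.image_singleton, Finset.pair_comm]
  · apply mem_mkM.mpr
    refine Or.inl ⟨c, hc, ?_⟩
    rw [Finset.image_insert, Finset.image_singleton]
    simp [Finset.pair_comm]
  · apply mem_mkM.mpr
    refine Or.inr (Or.inr ⟨y, hy1, hy2, ?_⟩)
    rw [Finset.image_insert, Finset.image_singleton]
    simp [Finset.pair_comm]

include hC hPB hpos in
lemma mkM_ncsp : IsNCSP X (mkM X C) := by
  refine ⟨?_, ?_, ?_, ?_, ?_⟩
  · -- cards
    intro b hb
    rcases mem_mkM.mp hb with ⟨c, hc, rfl⟩ | ⟨c, hc, rfl⟩ | ⟨y, hy1, hy2, rfl⟩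
    · have h1 := (ofn_spec hC hPB hc).2.1
      exact Finset.card_pair (by omega)
    · have h1 := cpos hC hpos hc
      have h2 := opos hC hPB hpos hc
      have h3 := (ofn_spec hC hPB hc).2.1
      exact Finset.card_pair (by omega)
    · have h1 := hpos y hy1.1
      exact Finset.card_pair (by omega)
  · -- ground
    intro b hb x hxb
    rcases mem_mkM.mp hb with ⟨c, hc, rfl⟩ | ⟨c, hc, rfl⟩ | ⟨y, hy1, hy2, rfl⟩ <;>
      simp only [Finset.mem_insert, Finset.mem_singleton] at hxb
    · rcases hxb with rfl | rfl
      · exact Or.inl (Finset.mem_sdiff.mp (ofn_spec hC hPB hc).1).1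
      · exact Or.inl (hC hc)
    · rcases hxb with rfl | rfl
      · exact Or.inr (by rw [neg_neg]; exact hC hc)
      · exact Or.inr (by rw [neg_neg]; exact (Finset.mem_sdiff.mp (ofn_spec hC hPB hc).1).1)
    · rcases hxb with rfl | rfl
      · exact Or.inr (by rw [neg_neg]; exact hy1.1)
      · exact Or.inl hy1.1
  · -- ∃!
    intro x hx
    rcases hx with hx | hx
    · exact exu_pos hC hPB hpos hx
    · have h := exu_pos hC hPB hpos hx
      have h2 := exu_neg_transfer (fun b hb => mkM_sym hb) h
      rwa [neg_neg] at h2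
  · -- symmetry
    intro b hb
    exact mkM_sym hb
  · -- noncrossing
    rintro ⟨a, b, c, d, h1, h2, h3, hac, hbd⟩
    rcases mem_mkM.mp hac with ⟨c1, hc1, he1⟩ | ⟨c1, hc1, he1⟩ | ⟨y1, hy11, hy12, he1⟩ <;>
      rcases mem_mkM.mp hbd with ⟨c2, hc2, he2⟩ | ⟨c2, hc2, he2⟩ | ⟨y2, hy21, hy22, he2⟩
    -- (1,1)
    · obtain ⟨rfl, rfl⟩ := pair_inj he1 (by omega) (by have := (ofn_spec hC hPB hc1).2.1; omega)
      obtain ⟨rfl, rfl⟩ := pair_inj he2 (by omega) (by have := (ofn_spec hC hPB hc2).2.1; omega)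
      rcases nested hC hPB hc1 hc2 h3 with hn | hn <;> omega
    -- (1,2)
    · obtain ⟨rfl, rfl⟩ := pair_inj he1 (by omega) (by have := (ofn_spec hC hPB hc1).2.1; omega)
      obtain ⟨rfl, rfl⟩ := pair_inj he2 (by omega) (by have := cpos hC hpos hc2; have := opos hC hPB hpos hc2; have := (ofn_spec hC hPB hc2).2.1; omega)
      have := opos hC hPB hpos hc1
      have := cpos hC hpos hc2
      omega
    -- (1,3)
    · obtain ⟨rfl, rfl⟩ := pair_inj he1 (by omega) (by have := (ofn_spec hC hPB hc1).2.1; omega)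
      obtain ⟨rfl, rfl⟩ := pair_inj he2 (by omega) (by have := hpos y2 hy21.1; omega)
      have := opos hC hPB hpos hc1
      have := hpos d hy21.1
      omega
    -- (2,1)
    · obtain ⟨rfl, rfl⟩ := pair_inj he1 (by omega) (by have := cpos hC hpos hc1; have := opos hC hPB hpos hc1; have := (ofn_spec hC hPB hc1).2.1; omega)
      obtain ⟨rfl, rfl⟩ := pair_inj he2 (by omega) (by have := (ofn_spec hC hPB hc2).2.1; omega)
      have := opos hC hPB hpos hc1
      have := opos hC hPB hpos hc2
      omega
    -- (2,2)
    · obtain ⟨rfl, rfl⟩ := pair_inj he1 (by omega) (by have := cpos hC hpos hc1; have := opos hC hPB hpos hc1; have := (ofn_spec hC hPB hc1).2.1; omega)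
      obtain ⟨rfl, rfl⟩ := pair_inj he2 (by omega) (by have := cpos hC hpos hc2; have := opos hC hPB hpos hc2; have := (ofn_spec hC hPB hc2).2.1; omega)
      have hlt : c2 < c1 := by omega
      rcases nested hC hPB hc2 hc1 hlt with hn | hn <;> omega
    -- (2,3)
    · obtain ⟨rfl, rfl⟩ := pair_inj he1 (by omega) (by have := cpos hC hpos hc1; have := opos hC hPB hpos hc1; have := (ofn_spec hC hPB hc1).2.1; omega)
      obtain ⟨rfl, rfl⟩ := pair_inj he2 (by omega) (by have := hpos y2 hy21.1; omega)
      obtain ⟨c'', hc'', ho⟩ := covered hC hPB (Finset.mem_sdiff.mpr hy21) hc1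
        (by omega) (by omega)
      exact hy22 (Finset.mem_image.mpr ⟨c'', hc'', ho⟩)
    -- (3,1)
    · obtain ⟨rfl, rfl⟩ := pair_inj he1 (by omega) (by have := hpos y1 hy11.1; omega)
      obtain ⟨rfl, rfl⟩ := pair_inj he2 (by omega) (by have := (ofn_spec hC hPB hc2).2.1; omega)
      obtain ⟨c'', hc'', ho⟩ := covered hC hPB (Finset.mem_sdiff.mpr hy11) hc2
        (by omega) (by omega)
      exact hy12 (Finset.mem_image.mpr ⟨c'', hc'', ho⟩)
    -- (3,2)
    · obtain ⟨rfl, rfl⟩ := pair_inj he1 (by omega) (by have := hpos y1 hy11.1; omega)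
      obtain ⟨rfl, rfl⟩ := pair_inj he2 (by omega) (by have := cpos hC hpos hc2; have := opos hC hPB hpos hc2; have := (ofn_spec hC hPB hc2).2.1; omega)
      have := hpos c hy11.1
      have := opos hC hPB hpos hc2
      omega
    -- (3,3)
    · obtain ⟨rfl, rfl⟩ := pair_inj he1 (by omega) (by have := hpos y1 hy11.1; omega)
      obtain ⟨rfl, rfl⟩ := pair_inj he2 (by omega) (by have := hpos y2 hy21.1; omega)
      omega

include hC hPB hpos in
lemma Cl_mkM : Cl X (mkM X C) = C := by
  ext x
  simp only [Cl, Finset.mem_filter]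
  constructor
  · rintro ⟨hxX, z, hzX, hzx, hzM⟩
    rcases mem_mkM.mp hzM with ⟨c, hc, he⟩ | ⟨c, hc, he⟩ | ⟨y, hy1, hy2, he⟩
    · have h1 := (ofn_spec hC hPB hc).2.1
      obtain ⟨rfl, rfl⟩ := pair_inj he hzx h1
      exact hc
    · exfalso
      have h1 := cpos hC hpos hc
      have h2 := opos hC hPB hpos hc
      have h3 := (ofn_spec hC hPB hc).2.1
      obtain ⟨rfl, rfl⟩ := pair_inj he hzx (by omega)
      have := hpos _ hzX
      omega
    · exfalso
      have h1 := hpos y hy1.1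
      obtain ⟨rfl, rfl⟩ := pair_inj he hzx (by omega)
      have := hpos _ hzX
      omega
  · intro hxC
    refine ⟨hC hxC, ofn X C x, ?_, (ofn_spec hC hPB hxC).2.1,
      mem_mkM.mpr (Or.inl ⟨x, hxC, rfl⟩)⟩
    exact (Finset.mem_sdiff.mp (ofn_spec hC hPB hxC).1).1

end MK

lemma image_neg_pair (u v : ℤ) :
    ({u, v} : Finset ℤ).image (fun z => -z) = {-u, -v} := by
  rw [Finset.image_insert, Finset.image_singleton]

noncomputable def pfn (X : Finset ℤ) (M : Finset (Finset ℤ)) (t : ℤ) : ℤ :=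
  if h : ∃ z, z ∈ X ∧ z < t ∧ ({z, t} : Finset ℤ) ∈ M then h.choose else 0

lemma pfn_spec {X : Finset ℤ} {M : Finset (Finset ℤ)} {t : ℤ} (h : t ∈ Cl X M) :
    pfn X M t ∈ X ∧ pfn X M t < t ∧ ({pfn X M t, t} : Finset ℤ) ∈ M := by
  have h' : ∃ z, z ∈ X ∧ z < t ∧ ({z, t} : Finset ℤ) ∈ M := by
    simp only [Cl, Finset.mem_filter] at h
    obtain ⟨_, z, hz, h1, h2⟩ := h
    exact ⟨z, hz, h1, h2⟩
  rw [pfn, dif_pos h']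
  exact h'.choose_spec

lemma cnt_split (A : Finset ℤ) {z c : ℤ} (hzc : z ≤ c) :
    cnt A c = cnt A z + (A.filter (fun x => z < x ∧ x ≤ c)).card := by
  unfold cnt
  have he : A.filter (fun x => x ≤ c)
      = A.filter (fun x => x ≤ z) ∪ A.filter (fun x => z < x ∧ x ≤ c) := by
    ext x
    simp only [Finset.mem_filter, Finset.mem_union]
    constructor
    · intro ⟨h1, h2⟩
      by_cases hxz : x ≤ z
      · exact Or.inl ⟨h1, hxz⟩
      · exact Or.inr ⟨h1, by omega, h2⟩
    · rintro (⟨h1, h2⟩ | ⟨h1, h2, h3⟩)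
      · exact ⟨h1, by omega⟩
      · exact ⟨h1, h3⟩
  rw [he, Finset.card_union_of_disjoint]
  rw [Finset.disjoint_left]
  intro x h1 h2
  simp only [Finset.mem_filter] at h1 h2
  omega

section AB

variable {X : Finset ℤ} {M : Finset (Finset ℤ)}
  (hpos : ∀ x ∈ X, 0 < x) (hM : IsNCSP X M)

include hM in
lemma block_two {b : Finset ℤ} (hb : b ∈ M) : ∃ u v : ℤ, u < v ∧ b = {u, v} := by
  have h2 := hM.1 b hb
  rw [Finset.card_eq_two] at h2
  obtain ⟨u, v, huv, rfl⟩ := h2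
  rcases lt_or_gt_of_ne huv with h | h
  · exact ⟨u, v, h, rfl⟩
  · exact ⟨v, u, h, Finset.pair_comm u v⟩

include hM in
lemma block_unique {x : ℤ} {b1 b2 : Finset ℤ} (hx : x ∈ X ∨ -x ∈ X)
    (h1 : b1 ∈ M) (h2 : b2 ∈ M) (hx1 : x ∈ b1) (hx2 : x ∈ b2) : b1 = b2 := by
  obtain ⟨b, _, hu⟩ := hM.2.2.1 x hx
  rw [hu b1 ⟨h1, hx1⟩, hu b2 ⟨h2, hx2⟩]

include hpos hM in
lemma no_mixed {x y : ℤ} (hx : x ∈ X) (hy : y ∈ X)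
    (hxy : ({x, -y} : Finset ℤ) ∈ M) : y = x := by
  by_contra hne
  have hx0 := hpos x hx
  have hy0 := hpos y hy
  have him : ({-x, y} : Finset ℤ) ∈ M := by
    have h := hM.2.2.2.1 _ hxy
    rwa [image_neg_pair, neg_neg] at h
  rcases lt_or_gt_of_ne hne with h | h
  · -- y < x
    exact hM.2.2.2.2 ⟨-x, -y, y, x, by omega, by omega, by omega,
      him, (Finset.pair_comm x (-y)) ▸ hxy⟩
  · -- x < y
    exact hM.2.2.2.2 ⟨-y, -x, x, y, by omega, by omega, by omega,
      (Finset.pair_comm x (-y)) ▸ hxy, him⟩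

include hpos hM in
lemma block_cases' {x : ℤ} {b : Finset ℤ} (hx : x ∈ X) (hb : b ∈ M) (hxb : x ∈ b) :
    (∃ z, z ∈ X ∧ z < x ∧ b = {z, x}) ∨ (∃ w, w ∈ X ∧ x < w ∧ b = {x, w}) ∨ b = {-x, x} := by
  obtain ⟨u, v, huv, rfl⟩ := block_two hM hb
  have hx0 := hpos x hx
  simp only [Finset.mem_insert, Finset.mem_singleton] at hxb
  rcases hxb with rfl | rfl
  · -- x = u
    rcases hM.2.1 _ hb v (by simp) with hvX | hvX
    · exact Or.inr (Or.inl ⟨v, hvX, huv, rfl⟩)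
    · exfalso
      have hv : v = -(-v) := by ring
      have := no_mixed hpos hM hx hvX (by rw [hv] at hb; exact hb)
      have := hpos _ hvX
      omega
  · -- x = v
    rcases hM.2.1 _ hb u (by simp) with huX | huX
    · exact Or.inl ⟨u, huX, huv, rfl⟩
    · have hu : u = -(-u) := by ring
      have heq := no_mixed hpos hM hx huX
        (by rw [Finset.pair_comm u x, hu] at hb; exact hb)
      right; right
      rw [show u = -x by omega]

include hpos hM in
lemma opener_not_closer {z c : ℤ} (hz : z ∈ X) (hzc : z < c)
    (hb : ({z, c} : Finset ℤ) ∈ M) : z ∉ Cl X M := by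
  intro hzCl
  obtain ⟨hp1, hp2, hp3⟩ := pfn_spec hzCl
  have heq := block_unique hM (Or.inl hz) hp3 hb (by simp) (by simp)
  obtain ⟨h1, h2⟩ := pair_inj heq hp2 hzc
  omega

include hM in
lemma pfn_eq_of_arc {z c : ℤ} (hz : z ∈ X) (hc : c ∈ X) (hzc : z < c)
    (harc : ({z, c} : Finset ℤ) ∈ M) : pfn X M c = z := by
  have hcCl : c ∈ Cl X M := Finset.mem_filter.mpr ⟨hc, z, hz, hzc, harc⟩
  obtain ⟨hp1, hp2, hp3⟩ := pfn_spec hcCl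
  have heq := block_unique hM (Or.inl hc) hp3 harc (by simp) (by simp)
  exact (pair_inj heq hp2 hzc).1

include hpos hM in
lemma interval_closed {z c t : ℤ} (hz : z ∈ X) (hc : c ∈ X) (hzc : z < c)
    (harc : ({z, c} : Finset ℤ) ∈ M) (ht : t ∈ X) (h1 : z < t) (h2 : t < c) :
    ∃ w, w ∈ X ∧ z < w ∧ w < c ∧ w ≠ t ∧ ({t, w} : Finset ℤ) ∈ M := by
  obtain ⟨b, ⟨hbM, htb⟩, _⟩ := hM.2.2.1 t (Or.inl ht)
  have hz0 := hpos z hz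
  have ht0 := hpos t ht
  rcases block_cases' hpos hM ht hbM htb with ⟨w, hwX, hwt, rfl⟩ | ⟨w, hwX, htw, rfl⟩ | rfl
  · -- b = {w, t}, w < t
    rcases lt_trichotomy w z with hh | hh | hh
    · exact absurd ⟨w, z, t, c, hh, h1, h2, hbM, harc⟩ hM.2.2.2.2
    · subst hh
      have heq := block_unique hM (Or.inl hwX) hbM harc (by simp) (by simp)
      obtain ⟨_, h⟩ := pair_inj heq hwt hzc
      omega
    · exact ⟨w, hwX, hh, by omega, by omega, (Finset.pair_comm w t) ▸ hbM⟩
  · -- b = {t, w}, t < w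
    rcases lt_trichotomy c w with hh | hh | hh
    · exact absurd ⟨z, t, c, w, h1, h2, hh, harc, hbM⟩ hM.2.2.2.2
    · subst hh
      have heq := block_unique hM (Or.inl hc) hbM harc (by simp) (by simp)
      obtain ⟨h, _⟩ := pair_inj heq htw hzc
      omega
    · exact ⟨w, hwX, by omega, hh, by omega, hbM⟩
  · exact absurd ⟨-t, z, t, c, by omega, h1, h2, hbM, harc⟩ hM.2.2.2.2

include hpos hM in
lemma pfn_of_closer_in {z c t : ℤ} (hz : z ∈ X) (hc : c ∈ X) (hzc : z < c)
    (harc : ({z, c} : Finset ℤ) ∈ M) (ht : t ∈ X) (h1 : z < t) (h2 : t < c)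
    (htCl : t ∈ Cl X M) :
    pfn X M t ∈ X ∧ pfn X M t ∉ Cl X M ∧ z < pfn X M t ∧ pfn X M t < t := by
  obtain ⟨hp1, hp2, hp3⟩ := pfn_spec htCl
  obtain ⟨w, hwX, hw1, hw2, hw3, hw4⟩ := interval_closed hpos hM hz hc hzc harc ht h1 h2
  have hweq : pfn X M t = w := by
    have heq := block_unique hM (Or.inl ht) hp3 hw4 (by simp) (by simp)
    have hmem : pfn X M t ∈ ({t, w} : Finset ℤ) := by rw [← heq]; simp
    simp only [Finset.mem_insert, Finset.mem_singleton] at hmem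
    rcases hmem with h | h
    · omega
    · exact h
  refine ⟨hp1, ?_, by omega, hp2⟩
  exact opener_not_closer hpos hM hp1 hp2 hp3

include hpos hM in
lemma pfn_injOn {t1 t2 : ℤ} (h1 : t1 ∈ Cl X M) (h2 : t2 ∈ Cl X M)
    (he : pfn X M t1 = pfn X M t2) : t1 = t2 := by
  obtain ⟨ha1, ha2, ha3⟩ := pfn_spec h1
  obtain ⟨hb1, hb2, hb3⟩ := pfn_spec h2
  rw [he] at ha3
  have heq := block_unique hM (Or.inl hb1) ha3 hb3 (by simp) (by simp)
  exact (pair_inj heq (he ▸ ha2) hb2).2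

include hpos hM in
lemma cl_PB : PBh X 0 (Cl X M) := by
  intro t
  have hle : cnt (Cl X M) t ≤ cnt (X \ Cl X M) t := by
    apply Finset.card_le_card_of_injOn (pfn X M)
    · intro c' hc'
      simp only [cnt, Finset.mem_coe, Finset.mem_filter, Finset.mem_sdiff] at hc' ⊢
      obtain ⟨hc'Cl, hc't⟩ := hc'
      obtain ⟨hp1, hp2, hp3⟩ := pfn_spec hc'Cl
      exact ⟨⟨hp1, opener_not_closer hpos hM hp1 hp2 hp3⟩, by omega⟩
    · intro t1 ht1 t2 ht2 he
      simp only [cnt, Finset.coe_filter, Set.mem_setOf_eq] at ht1 ht2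
      exact pfn_injOn hpos hM ht1.1 ht2.1 he
  unfold hgt
  omega

include hpos hM in
lemma arc_balance {z c : ℤ} (hz : z ∈ X) (hc : c ∈ X) (hzc : z < c)
    (harc : ({z, c} : Finset ℤ) ∈ M) :
    hgt X (Cl X M) z = hgt X (Cl X M) c + 1 := by
  have hcCl : c ∈ Cl X M := Finset.mem_filter.mpr ⟨hc, z, hz, hzc, harc⟩
  -- bijection between closers and openers strictly inside (z, c)
  have hcards : (X.filter (fun t => z < t ∧ t < c ∧ t ∈ Cl X M)).card
      = (X.filter (fun t => z < t ∧ t < c ∧ t ∉ Cl X M)).card := by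
    apply Finset.card_bij (fun t _ => pfn X M t)
    · intro t ht
      simp only [Finset.mem_filter] at ht ⊢
      obtain ⟨htX, ht1, ht2, ht3⟩ := ht
      obtain ⟨q1, q2, q3, q4⟩ := pfn_of_closer_in hpos hM hz hc hzc harc htX ht1 ht2 ht3
      exact ⟨q1, q3, by omega, q2⟩
    · intro t1 ht1 t2 ht2 he
      simp only [Finset.mem_filter] at ht1 ht2
      exact pfn_injOn hpos hM ht1.2.2.2 ht2.2.2.2 he
    · intro y hy
      simp only [Finset.mem_filter] at hy
      obtain ⟨hyX, hy1, hy2, hy3⟩ := hy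
      obtain ⟨w, hwX, hw1, hw2, hw3, hw4⟩ := interval_closed hpos hM hz hc hzc harc hyX hy1 hy2
      have hyw : y < w := by
        rcases lt_trichotomy y w with hh | hh | hh
        · exact hh
        · omega
        · exfalso
          exact hy3 (Finset.mem_filter.mpr ⟨hyX, w, hwX, hh, (Finset.pair_comm y w) ▸ hw4⟩)
      have hwCl : w ∈ Cl X M := Finset.mem_filter.mpr ⟨hwX, y, hyX, hyw, hw4⟩
      refine ⟨w, Finset.mem_filter.mpr ⟨hwX, hw1, hw2, hwCl⟩, ?_⟩
      exact pfn_eq_of_arc hM hyX hwX hyw hw4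
  -- now express hgt difference
  have hfO : (X \ Cl X M).filter (fun x => z < x ∧ x ≤ c)
      = X.filter (fun t => z < t ∧ t < c ∧ t ∉ Cl X M) := by
    ext t
    simp only [Finset.mem_filter, Finset.mem_sdiff]
    constructor
    · intro ⟨⟨h1, h2⟩, h3, h4⟩
      have htc : t ≠ c := fun hh => h2 (hh ▸ hcCl)
      exact ⟨h1, h3, by omega, h2⟩
    · intro ⟨h1, h2, h3, h4⟩
      exact ⟨⟨h1, h4⟩, h2, by omega⟩
  have hO : cnt (X \ Cl X M) c = cnt (X \ Cl X M) z
      + (X.filter (fun t => z < t ∧ t < c ∧ t ∉ Cl X M)).card := by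
    rw [cnt_split (X \ Cl X M) (le_of_lt hzc), hfO]
  have hCc : cnt (Cl X M) c = cnt (Cl X M) z
      + ((X.filter (fun t => z < t ∧ t < c ∧ t ∈ Cl X M)).card + 1) := by
    have he : (Cl X M).filter (fun x => z < x ∧ x ≤ c)
        = insert c (X.filter (fun t => z < t ∧ t < c ∧ t ∈ Cl X M)) := by
      ext t
      simp only [Finset.mem_filter, Finset.mem_insert]
      constructor
      · intro ⟨h1, h2, h3⟩
        rcases eq_or_lt_of_le h3 with rfl | hh
        · exact Or.inl rfl
        · exact Or.inr ⟨Finset.mem_of_mem_filter t h1, h2, hh, h1⟩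
      · rintro (rfl | ⟨h1, h2, h3, h4⟩)
        · exact ⟨hcCl, hzc, le_refl _⟩
        · exact ⟨h4, h2, by omega⟩
    rw [cnt_split (Cl X M) (le_of_lt hzc), he, Finset.card_insert_of_notMem]
    simp only [Finset.mem_filter]
    intro ⟨_, _, hh, _⟩
    omega
  rw [hcards] at hCc
  unfold hgt
  omega

include hpos hM in
lemma partner_eq_ofn {z c : ℤ} (hz : z ∈ X) (hc : c ∈ X) (hzc : z < c)
    (harc : ({z, c} : Finset ℤ) ∈ M) : z = ofn X (Cl X M) c := by
  have hCM : Cl X M ⊆ X := Finset.filter_subset _ _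
  have hPB : PBh X 0 (Cl X M) := cl_PB hpos hM
  have hcCl : c ∈ Cl X M := Finset.mem_filter.mpr ⟨hc, z, hz, hzc, harc⟩
  have hzO : z ∉ Cl X M := opener_not_closer hpos hM hz hzc harc
  have hbal : hgt X (Cl X M) z = hgt X (Cl X M) c + 1 := arc_balance hpos hM hz hc hzc harc
  have hle : z ≤ ofn X (Cl X M) c := le_max_unbot'
    (Finset.mem_filter.mpr ⟨Finset.mem_sdiff.mpr ⟨hz, hzO⟩, hzc, hbal⟩)
  rcases eq_or_lt_of_le hle with heq | hlt
  · exact heq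
  · exfalso
    obtain ⟨hy1, hy2, hy3⟩ := ofn_spec hCM hPB hcCl
    set y := ofn X (Cl X M) c with hydef
    rw [Finset.mem_sdiff] at hy1
    -- counting: strictly more openers than closers in (z, y]
    have hinj : ((Cl X M).filter (fun x => z < x ∧ x ≤ y)).card
        ≤ (((X \ Cl X M).filter (fun x => z < x ∧ x ≤ y)).erase y).card := by
      apply Finset.card_le_card_of_injOn (pfn X M)
      · intro t ht
        simp only [Finset.mem_coe, Finset.mem_filter] at ht
        obtain ⟨htCl, ht1, ht2⟩ := ht
        have htX : t ∈ X := hCM htCl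
        obtain ⟨q1, q2, q3, q4⟩ := pfn_of_closer_in hpos hM hz hc hzc harc htX ht1
          (by omega) htCl
        simp only [Finset.mem_coe, Finset.mem_erase, Finset.mem_filter, Finset.mem_sdiff]
        exact ⟨by omega, ⟨q1, q2⟩, q3, by omega⟩
      · intro t1 ht1 t2 ht2 he
        simp only [Finset.coe_filter, Set.mem_setOf_eq] at ht1 ht2
        exact pfn_injOn hpos hM ht1.1 ht2.1 he
    have hyO : y ∈ (X \ Cl X M).filter (fun x => z < x ∧ x ≤ y) :=
      Finset.mem_filter.mpr ⟨Finset.mem_sdiff.mpr ⟨hy1.1, hy1.2⟩, hlt, le_refl _⟩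
    rw [Finset.card_erase_of_mem hyO] at hinj
    have hsplitO := cnt_split (X \ Cl X M) (le_of_lt hlt)
    have hsplitC := cnt_split (Cl X M) (le_of_lt hlt)
    have hpos' : 0 < ((X \ Cl X M).filter (fun x => z < x ∧ x ≤ y)).card :=
      Finset.card_pos.mpr ⟨y, hyO⟩
    unfold hgt at hy3 hbal
    omega

include hpos hM in
lemma M_eq_mkM : M = mkM X (Cl X M) := by
  have hCM : Cl X M ⊆ X := Finset.filter_subset _ _
  have hPB : PBh X 0 (Cl X M) := cl_PB hpos hM
  ext b
  constructor
  · intro hb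
    obtain ⟨u, v, huv, rfl⟩ := block_two hM hb
    rcases hM.2.1 _ hb v (by simp) with hvX | hvX
    · -- v ∈ X, positive
      have hv0 := hpos v hvX
      rcases hM.2.1 _ hb u (by simp) with huX | huX
      · -- u ∈ X : u is the opener of closer v
        have hvCl : v ∈ Cl X M := Finset.mem_filter.mpr ⟨hvX, u, huX, huv, hb⟩
        have hu : u = ofn X (Cl X M) v := partner_eq_ofn hpos hM huX hvX huv hb
        apply mem_mkM.mpr
        exact Or.inl ⟨v, hvCl, by rw [← hu]⟩
      · -- -u ∈ X : singleton pair {-v, v}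
        have heq : -u = v := by
          have hv : u = -(-u) := by ring
          exact no_mixed hpos hM hvX huX
            (by rw [Finset.pair_comm u v, hv] at hb; exact hb)
        have hbv : ({-v, v} : Finset ℤ) ∈ M := by
          rw [show u = -v by omega] at hb
          exact hb
        have hvnCl : v ∉ Cl X M := by
          intro hvCl
          obtain ⟨hp1, hp2, hp3⟩ := pfn_spec hvCl
          have hequ := block_unique hM (Or.inl hvX) hp3 hbv (by simp) (by simp)
          obtain ⟨hh1, hh2⟩ := pair_inj hequ hp2 (by omega)
          have := hpos _ hp1
          omega
        have hvnI : v ∉ (Cl X M).image (ofn X (Cl X M)) := by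
          intro hvI
          obtain ⟨c, hcCl, hco⟩ := Finset.mem_image.mp hvI
          obtain ⟨hp1, hp2, hp3⟩ := pfn_spec hcCl
          have hz := partner_eq_ofn hpos hM hp1 (hCM hcCl) hp2 hp3
          rw [← hz] at hco
          subst hco
          have hequ := block_unique hM (Or.inl hp1) hp3 hbv (by simp) (by simp)
          obtain ⟨hh1, hh2⟩ := pair_inj hequ hp2 (by omega)
          have := hpos _ (hCM hcCl)
          omega
        apply mem_mkM.mpr
        refine Or.inr (Or.inr ⟨v, ⟨hvX, hvnCl⟩, by simpa using hvnI, ?_⟩)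
        rw [show u = -v by omega]
    · -- -v ∈ X : v < 0, so u < v < 0, both negative: mirror of an arc
      have hv0 : v < 0 := by have := hpos _ hvX; omega
      have hunX : -u ∈ X := by
        rcases hM.2.1 _ hb u (by simp) with huX | huX
        · have := hpos u huX; omega
        · exact huX
      have hmir : ({-v, -u} : Finset ℤ) ∈ M := by
        have h := hM.2.2.2.1 _ hb
        rw [image_neg_pair] at h
        rwa [Finset.pair_comm] at h
      have huCl : -u ∈ Cl X M := Finset.mem_filter.mpr ⟨hunX, -v, hvX, by omega, hmir⟩
      have hz := partner_eq_ofn hpos hM hvX hunX (by omega) hmir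
      apply mem_mkM.mpr
      refine Or.inr (Or.inl ⟨-u, huCl, ?_⟩)
      rw [← hz]
      simp
  · intro hb
    rcases mem_mkM.mp hb with ⟨c, hcCl, rfl⟩ | ⟨c, hcCl, rfl⟩ | ⟨y, hy1, hy2, rfl⟩
    · obtain ⟨hp1, hp2, hp3⟩ := pfn_spec hcCl
      have hz := partner_eq_ofn hpos hM hp1 (hCM hcCl) hp2 hp3
      rw [← hz]
      exact hp3
    · obtain ⟨hp1, hp2, hp3⟩ := pfn_spec hcCl
      have hz := partner_eq_ofn hpos hM hp1 (hCM hcCl) hp2 hp3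
      have h := hM.2.2.2.1 _ hp3
      rw [image_neg_pair] at h
      rw [← hz]
      rwa [Finset.pair_comm]
    · -- singleton
      obtain ⟨b', ⟨hb'M, hyb'⟩, _⟩ := hM.2.2.1 y (Or.inl hy1.1)
      rcases block_cases' hpos hM hy1.1 hb'M hyb' with ⟨z, hzX, hzy, rfl⟩ | ⟨w, hwX, hyw, rfl⟩ | rfl
      · exfalso
        exact hy1.2 (Finset.mem_filter.mpr ⟨hy1.1, z, hzX, hzy, hb'M⟩)
      · exfalso
        have hwCl : w ∈ Cl X M := Finset.mem_filter.mpr ⟨hwX, y, hy1.1, hyw, hb'M⟩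
        have hz := partner_eq_ofn hpos hM hy1.1 hwX hyw hb'M
        exact (by simpa using hy2 : ∀ c ∈ Cl X M, ofn X (Cl X M) c ≠ y) w hwCl (by omega)
      · exact hb'M

end AB

end Auxiliary

/-- For a finite set `X` of `m` positive integers, the number of
noncrossing symmetric perfect matchings on `X ⊔ (−X)` is the central binomial
coefficient `C(m, ⌊m/2⌋)`. -/
theorem stmt14 (X : Finset ℤ) (hpos : ∀ x ∈ X, 0 < x) :
    {M : Finset (Finset ℤ) | IsNCSP X M}.ncard = X.card.choose (X.card / 2) := by
  classical
  have hset : {M : Finset (Finset ℤ) | IsNCSP X M}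
      = ↑((X.powerset.filter (PBh X 0)).image (mkM X)) := by
    ext M
    simp only [Set.mem_setOf_eq, Finset.coe_image, Set.mem_image, Finset.mem_coe,
      Finset.mem_filter, Finset.mem_powerset]
    constructor
    · intro hM
      exact ⟨Cl X M, ⟨Finset.filter_subset _ _, cl_PB hpos hM⟩, (M_eq_mkM hpos hM).symm⟩
    · rintro ⟨C, ⟨hC, hPB⟩, rfl⟩
      exact mkM_ncsp hC hPB hpos
  rw [hset, Set.ncard_coe_finset]
  rw [Finset.card_image_of_injOn]
  · rw [countPB X.card X rfl 0, Nw_eq_Gw, Gw_zero]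
  · intro C1 h1 C2 h2 he
    simp only [Finset.coe_filter, Finset.mem_powerset, Set.mem_setOf_eq] at h1 h2
    calc C1 = Cl X (mkM X C1) := (Cl_mkM h1.1 h1.2 hpos).symm
    _ = Cl X (mkM X C2) := by rw [he]
    _ = C2 := Cl_mkM h2.1 h2.2 hpos
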